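/- For every N ≥ 2 and every KC-PMI P on N parties, P̄ equals the up-set in the MI-poset generated by the union of all essential β-sets, and also equals the up-set generated by the union of all positive β-sets; that is, P̄ = { m ∈ M_N : ∃ m' ⪯ m with m' ∈ β(X) for some essential β(X) } = { m ∈ M_N : ∃ m' ⪯ m with m' ∈ β(X) for some positive β(X) }. -/
import Mathlib


namespace HEC

/-- The parties `⟦N⟧ = {0,1,…,N}`, where `0` is the purifier. -/
abbrev Party (N : ℕ) := Fin (N + 1)

/-- A collection of parties. -/
abbrev PSet (N : ℕ) := Finset (Party N)

/-- MI instances: unordered pairs of subsets of parties. -/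
abbrev MI (N : ℕ) := Sym2 (PSet N)

/-- `m` is an MI instance, i.e. an unordered pair of disjoint nonempty subsets of `⟦N⟧`. -/
def IsMIInst {N : ℕ} (m : MI N) : Prop :=
  ∃ Y Z : PSet N, m = s(Y, Z) ∧ Y.Nonempty ∧ Z.Nonempty ∧ Disjoint Y Z

/-- The MI-poset order: `{Y,Z} ⪯ {Y',Z'}` iff (`Y ⊆ Y'` and `Z ⊆ Z'`) or
(`Y ⊆ Z'` and `Z ⊆ Y'`).  (The two cases are absorbed by the existential over
representatives of the unordered pairs.) -/
def MIle {N : ℕ} (m m' : MI N) : Prop :=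
  ∃ Y Z Y' Z' : PSet N, m = s(Y, Z) ∧ m' = s(Y', Z') ∧ Y ⊆ Y' ∧ Z ⊆ Z'

/-- An `N`-party entropy vector, extended to all subsets of `⟦N⟧` by the purification
convention: `S ∅ = 0` and `S Y = S (⟦N⟧ \ Y)` whenever `0 ∈ Y`. -/
structure EntropyVec (N : ℕ) where
  S : PSet N → ℝ
  S_empty : S ∅ = 0
  S_purify : ∀ Y : PSet N, (0 : Party N) ∈ Y → S Y = S (Finset.univ \ Y)

/-- Mutual information `I(Y:Z) = S_Y + S_Z - S_{Y∪Z}`. -/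
def EntropyVec.I {N : ℕ} (v : EntropyVec N) (Y Z : PSet N) : ℝ :=
  v.S Y + v.S Z - v.S (Y ∪ Z)

/-- Membership in the subadditivity cone: `I(Y:Z) ≥ 0` for every MI instance. -/
def EntropyVec.InSAC {N : ℕ} (v : EntropyVec N) : Prop :=
  ∀ Y Z : PSet N, Y.Nonempty → Z.Nonempty → Disjoint Y Z → 0 ≤ v.I Y Z

/-- The pattern of marginal independence of `v`: the MI instances vanishing on `v`. -/
def EntropyVec.PMI {N : ℕ} (v : EntropyVec N) : Set (MI N) :=
  {m | ∃ Y Z : PSet N, m = s(Y, Z) ∧ Y.Nonempty ∧ Z.Nonempty ∧ Disjoint Y Z ∧ v.I Y Z = 0}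

/-- `P` is a down-set in the MI-poset. -/
def IsMIDownSet {N : ℕ} (P : Set (MI N)) : Prop :=
  ∀ m m' : MI N, IsMIInst m → m' ∈ P → MIle m m' → m ∈ P

/-- `P` is a KC-PMI: the PMI of some entropy vector in the subadditivity cone,
which moreover is a down-set in the MI-poset. -/
def IsKCPMI {N : ℕ} (P : Set (MI N)) : Prop :=
  (∃ v : EntropyVec N, v.InSAC ∧ P = v.PMI) ∧ IsMIDownSet P

/-- The β-set of `X`: all MI instances `{Y,Z}` with `Y ∪ Z = X`. -/
def betaSet {N : ℕ} (X : PSet N) : Set (MI N) :=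
  {m | ∃ Y Z : PSet N, m = s(Y, Z) ∧ Y.Nonempty ∧ Z.Nonempty ∧ Disjoint Y Z ∧ Y ∪ Z = X}

/-- The antichain `A` of minimal elements of `P̄ = M_N ∖ P`. -/
def minimalMI {N : ℕ} (P : Set (MI N)) : Set (MI N) :=
  {m | IsMIInst m ∧ m ∉ P ∧ ∀ m' : MI N, IsMIInst m' → m' ∉ P → MIle m' m → m' = m}

/-- `β(X)` is positive: `β(X) ⊆ P̄`. -/
def BPos {N : ℕ} (P : Set (MI N)) (X : PSet N) : Prop :=
  ∀ m ∈ betaSet X, m ∉ P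

/-- `β(X)` is vanishing: `β(X) ⊆ P`. -/
def BVan {N : ℕ} (P : Set (MI N)) (X : PSet N) : Prop :=
  betaSet X ⊆ P

/-- `β(X)` is partial: it has elements both in `P` and in `P̄`. -/
def BPart {N : ℕ} (P : Set (MI N)) (X : PSet N) : Prop :=
  (∃ m ∈ betaSet X, m ∈ P) ∧ (∃ m ∈ betaSet X, m ∉ P)

/-- `β(X)` is essential: `β(X) ∩ A ≠ ∅`. -/
def BEss {N : ℕ} (P : Set (MI N)) (X : PSet N) : Prop :=
  ∃ m ∈ betaSet X, m ∈ minimalMI P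

/-- `β(X)` is completely essential: `β(X) ⊆ A`. -/
def BCEss {N : ℕ} (P : Set (MI N)) (X : PSet N) : Prop :=
  betaSet X ⊆ minimalMI P

/-- `β(X)` is non-essential: `β(X) ∩ A = ∅`. -/
def BNEss {N : ℕ} (P : Set (MI N)) (X : PSet N) : Prop :=
  ∀ m ∈ betaSet X, m ∉ minimalMI P

/-- `pos_<(Y)`: the proper subsystems `Z ⊊ Y` with `|Z| ≥ 2` and `β(Z)` positive. -/
def posBelow {N : ℕ} (P : Set (MI N)) (Y : PSet N) : Set (PSet N) :=
  {Z | Z ⊂ Y ∧ 2 ≤ Z.card ∧ BPos P Z}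

/-- `Max(pos_<(Y))`: the inclusion-maximal elements of `pos_<(Y)`. -/
def maxPosBelow {N : ℕ} (P : Set (MI N)) (Y : PSet N) : Set (PSet N) :=
  {Z | Z ∈ posBelow P Y ∧ ∀ Z' ∈ posBelow P Y, Z ⊆ Z' → Z = Z'}

/-- The MI instance `m = {Y,Z}` splits `X` if `X ∩ Y ≠ ∅` and `X ∩ Z ≠ ∅`. -/
def Splits {N : ℕ} (m : MI N) (X : PSet N) : Prop :=
  ∃ Y Z : PSet N, m = s(Y, Z) ∧ (X ∩ Y).Nonempty ∧ (X ∩ Z).Nonempty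

/-- The hyperedges of the correlation hypergraph `H_P`: one hyperedge `e_X` for each
`X ⊆ ⟦N⟧` (with `|X| ≥ 2`) whose β-set is positive.  Vertices `v_ℓ` are identified
with the parties `ℓ ∈ ⟦N⟧`, and hyperedges with the corresponding subsystems. -/
def Hedge {N : ℕ} (P : Set (MI N)) : Set (PSet N) :=
  {X | 2 ≤ X.card ∧ BPos P X}

/-- The hyperedges of the sub-hypergraph `H_Y`: the hyperedges `e_Z` with `Z ⊊ Y`. -/
def subEdges {N : ℕ} (P : Set (MI N)) (Y : PSet N) : Set (PSet N) :=
  {Z | Z ⊂ Y ∧ Z ∈ Hedge P}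

/-- One step in a hypergraph with hyperedge set `E`: `a` and `b` lie in a common
hyperedge. -/
def hStep {N : ℕ} (E : Set (PSet N)) (a b : Party N) : Prop :=
  ∃ e ∈ E, a ∈ e ∧ b ∈ e

/-- Connectivity of the hypergraph with vertex set `V` and hyperedge set `E`:
every two vertices are joined by a path (a one-vertex hypergraph is connected). -/
def hConn {N : ℕ} (V : PSet N) (E : Set (PSet N)) : Prop :=
  ∀ a ∈ V, ∀ b ∈ V, Relation.ReflTransGen (hStep E) a b

/-- The vertex set of the connected component of `a` in the hypergraph with
vertex set `V` and hyperedge set `E`. -/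
def hComp {N : ℕ} (V : PSet N) (E : Set (PSet N)) (a : Party N) : Set (Party N) :=
  {b | b ∈ V ∧ Relation.ReflTransGen (hStep E) a b}

/-- A clique of the line graph `L_{H_P}`: a set of hyperedges of `H_P` which are
pairwise adjacent (distinct hyperedges being adjacent iff they intersect). -/
def IsLineClique {N : ℕ} (P : Set (MI N)) (Q : Set (PSet N)) : Prop :=
  Q ⊆ Hedge P ∧ ∀ e ∈ Q, ∀ f ∈ Q, e ≠ f → (e ∩ f).Nonempty

/-- A max-clique of the line graph `L_{H_P}`: a (nonempty) clique which is maximal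
under inclusion. -/
def IsMaxClique {N : ℕ} (P : Set (MI N)) (Q : Set (PSet N)) : Prop :=
  Q.Nonempty ∧ IsLineClique P Q ∧ ∀ Q' : Set (PSet N), IsLineClique P Q' → Q ⊆ Q' → Q = Q'

/-- `Q^∩`: the intersection of the hyperedges in `Q`, viewed as sets of vertices. -/
def qInter {N : ℕ} (Q : Set (PSet N)) : Set (Party N) :=
  {ℓ | ∀ e ∈ Q, ℓ ∈ e}

/-! ### Auxiliary lemmas -/

lemma MIle_refl {N : ℕ} {m : MI N} (hm : IsMIInst m) : MIle m m := by
  obtain ⟨Y, Z, rfl, -, -, -⟩ := hm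
  exact ⟨Y, Z, Y, Z, rfl, rfl, subset_rfl, subset_rfl⟩

lemma MIle_trans {N : ℕ} {a b c : MI N} (h1 : MIle a b) (h2 : MIle b c) : MIle a c := by
  obtain ⟨Y, Z, Y', Z', ha, hb, hYY, hZZ⟩ := h1
  obtain ⟨W, V, W', V', hb2, hc, hWW, hVV⟩ := h2
  rw [hb] at hb2
  rcases Sym2.eq_iff.mp hb2 with ⟨rfl, rfl⟩ | ⟨rfl, rfl⟩
  · exact ⟨Y, Z, W', V', ha, hc, hYY.trans hWW, hZZ.trans hVV⟩
  · exact ⟨Z, Y, W', V', by rw [ha, Sym2.eq_swap], hc, hZZ.trans hWW, hYY.trans hVV⟩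

/-- The total size of an MI instance. -/
def weight {N : ℕ} : MI N → ℕ :=
  Sym2.lift ⟨fun Y Z => Y.card + Z.card, fun _ _ => add_comm _ _⟩

lemma weight_mk {N : ℕ} (Y Z : PSet N) : weight s(Y, Z) = Y.card + Z.card := rfl

lemma weight_lt {N : ℕ} {a b : MI N} (h : MIle a b) (hne : a ≠ b) :
    weight a < weight b := by
  obtain ⟨Y, Z, Y', Z', rfl, rfl, h1, h2⟩ := h
  have c1 := Finset.card_le_card h1
  have c2 := Finset.card_le_card h2
  rw [weight_mk, weight_mk]
  refine lt_of_le_of_ne (Nat.add_le_add c1 c2) fun hEq => hne ?_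
  have hc : Y.card = Y'.card ∧ Z.card = Z'.card := by omega
  rw [Finset.eq_of_subset_of_card_le h1 hc.1.ge, Finset.eq_of_subset_of_card_le h2 hc.2.ge]

/-- Every element of `P̄` has a minimal element of `P̄` below it. -/
lemma exists_min {N : ℕ} (P : Set (MI N)) (m : MI N) (hm : IsMIInst m) (hmP : m ∉ P) :
    ∃ m', m' ∈ minimalMI P ∧ MIle m' m := by
  generalize hw : weight m = n
  induction n using Nat.strong_induction_on generalizing m with
  | _ n ih =>
    by_cases h : m ∈ minimalMI P
    · exact ⟨m, h, MIle_refl hm⟩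
    · simp only [minimalMI, Set.mem_setOf_eq] at h
      push_neg at h
      obtain ⟨m'', h1, h2, h3, h4⟩ := h hm hmP
      subst hw
      obtain ⟨m', hm', hle⟩ := ih (weight m'') (weight_lt h3 h4) m'' h1 h2 rfl
      exact ⟨m', hm', MIle_trans hle h3⟩

lemma I_comm {N : ℕ} (v : EntropyVec N) (Y Z : PSet N) : v.I Y Z = v.I Z Y := by
  unfold EntropyVec.I
  rw [Finset.union_comm]; ring

lemma PMI_I {N : ℕ} {v : EntropyVec N} {Y Z : PSet N} (h : s(Y, Z) ∈ v.PMI) :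
    v.I Y Z = 0 := by
  obtain ⟨Y₂, Z₂, heq, -, -, -, hI⟩ := h
  rcases Sym2.eq_iff.mp heq with ⟨rfl, rfl⟩ | ⟨rfl, rfl⟩
  · exact hI
  · rw [I_comm]; exact hI

lemma S_union_le {N : ℕ} (v : EntropyVec N) (hv : v.InSAC) (A B : PSet N)
    (hd : Disjoint A B) : v.S (A ∪ B) ≤ v.S A + v.S B := by
  rcases A.eq_empty_or_nonempty with rfl | hA
  · simp [v.S_empty]
  rcases B.eq_empty_or_nonempty with rfl | hB
  · simp [v.S_empty]
  · have := hv A B hA hB hd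
    unfold EntropyVec.I at this
    linarith

lemma I_empty_left {N : ℕ} (v : EntropyVec N) (B : PSet N) : v.I ∅ B = 0 := by
  simp [EntropyVec.I, v.S_empty]

lemma I_empty_right {N : ℕ} (v : EntropyVec N) (B : PSet N) : v.I B ∅ = 0 := by
  simp [EntropyVec.I, v.S_empty]

lemma nonempty_of_I_ne {N : ℕ} {v : EntropyVec N} {U V : PSet N} (h : v.I U V ≠ 0) :
    U.Nonempty ∧ V.Nonempty := by
  constructor
  · rcases U.eq_empty_or_nonempty with hE | h'
    · exact absurd (by rw [hE, I_empty_left]) h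
    · exact h'
  · rcases V.eq_empty_or_nonempty with hE | h'
    · exact absurd (by rw [hE, I_empty_right]) h
    · exact h'

/-- The key subadditivity argument: a vanishing and a non-vanishing MI instance in the
same β-set produce a strictly smaller non-vanishing instance below the latter. -/
lemma key {N : ℕ} (v : EntropyVec N) (hv : v.InSAC) {Y Z Y' Z' : PSet N}
    (hY : Y.Nonempty) (hZ : Z.Nonempty) (hdYZ : Disjoint Y Z)
    (hd' : Disjoint Y' Z')
    (hU : Y ∪ Z = Y' ∪ Z') (h0 : v.I Y Z = 0) (hne : v.I Y' Z' ≠ 0) :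
    ∃ A B : PSet N, A.Nonempty ∧ B.Nonempty ∧ Disjoint A B ∧ A ⊆ Y' ∧ B ⊆ Z' ∧
      A ∪ B ≠ Y' ∪ Z' ∧ v.I A B ≠ 0 := by
  set A := Y ∩ Y' with hAdef
  set B := Y ∩ Z' with hBdef
  set C := Z ∩ Y' with hCdef
  set D := Z ∩ Z' with hDdef
  have hYsub : Y ⊆ Y' ∪ Z' := hU ▸ Finset.subset_union_left
  have hZsub : Z ⊆ Y' ∪ Z' := hU ▸ Finset.subset_union_right
  have hAB : A ∪ B = Y := by
    rw [hAdef, hBdef, ← Finset.inter_union_distrib_left, Finset.inter_eq_left]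
    exact hYsub
  have hCD : C ∪ D = Z := by
    rw [hCdef, hDdef, ← Finset.inter_union_distrib_left, Finset.inter_eq_left]
    exact hZsub
  have hAC : A ∪ C = Y' := by
    rw [hAdef, hCdef, ← Finset.union_inter_distrib_right, hU, Finset.inter_eq_right]
    exact Finset.subset_union_left
  have hBD : B ∪ D = Z' := by
    rw [hBdef, hDdef, ← Finset.union_inter_distrib_right, hU, Finset.inter_eq_right]
    exact Finset.subset_union_right
  have hdAC : Disjoint A C := hdYZ.mono Finset.inter_subset_left Finset.inter_subset_left
  have hdBD : Disjoint B D := hdYZ.mono Finset.inter_subset_left Finset.inter_subset_left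
  have hdAB : Disjoint A B := hd'.mono Finset.inter_subset_right Finset.inter_subset_right
  have hdCD : Disjoint C D := hd'.mono Finset.inter_subset_right Finset.inter_subset_right
  have s1 : v.S (A ∪ C) ≤ v.S A + v.S C := S_union_le v hv A C hdAC
  have s2 : v.S (B ∪ D) ≤ v.S B + v.S D := S_union_le v hv B D hdBD
  have hIpos : 0 < v.I Y' Z' := by
    rcases Y'.eq_empty_or_nonempty with rfl | hY'
    · exact absurd (I_empty_left v Z') hne
    rcases Z'.eq_empty_or_nonempty with rfl | hZ'
    · exact absurd (I_empty_right v Y') hne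
    exact lt_of_le_of_ne (hv Y' Z' hY' hZ' hd') (Ne.symm hne)
  have hsum : 0 < v.I A B + v.I C D := by
    have e1 : v.I Y' Z' = v.S (A ∪ C) + v.S (B ∪ D) - v.S (Y ∪ Z) := by
      rw [hAC, hBD, hU]; rfl
    have e2 : v.S (Y ∪ Z) = v.S Y + v.S Z := by
      have : v.I Y Z = 0 := h0
      unfold EntropyVec.I at this; linarith
    have e3 : v.I A B = v.S A + v.S B - v.S Y := by rw [EntropyVec.I, hAB]
    have e4 : v.I C D = v.S C + v.S D - v.S Z := by rw [EntropyVec.I, hCD]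
    linarith
  have hYneX : Y ≠ Y' ∪ Z' := by
    intro h
    rw [← hU] at h
    have : Z ⊆ Y := h ▸ Finset.subset_union_right
    exact hZ.ne_empty (hdYZ.symm.eq_bot_of_le this)
  have hZneX : Z ≠ Y' ∪ Z' := by
    intro h
    rw [← hU] at h
    have : Y ⊆ Z := h ▸ Finset.subset_union_left
    exact hY.ne_empty (hdYZ.eq_bot_of_le this)
  rcases lt_or_ge 0 (v.I A B) with hI1 | hle
  · obtain ⟨hA, hB⟩ := nonempty_of_I_ne (ne_of_gt hI1)
    exact ⟨A, B, hA, hB, hdAB, Finset.inter_subset_right, Finset.inter_subset_right,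
      hAB ▸ hYneX, ne_of_gt hI1⟩
  · have hI2 : 0 < v.I C D := by linarith
    obtain ⟨hC, hD⟩ := nonempty_of_I_ne (ne_of_gt hI2)
    exact ⟨C, D, hC, hD, hdCD, Finset.inter_subset_right, Finset.inter_subset_right,
      hCD ▸ hZneX, ne_of_gt hI2⟩

/-- For a KC-PMI, every essential β-set is positive. -/
lemma ess_pos {N : ℕ} (P : Set (MI N)) (hP : IsKCPMI P) (X : PSet N)
    (h : BEss P X) : BPos P X := by
  obtain ⟨⟨v, hv, hPv⟩, hdown⟩ := hP
  intro m hm hmP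
  obtain ⟨m₀, hm₀β, hm₀inst, hm₀P, hm₀min⟩ := h
  obtain ⟨Y, Z, rfl, hYne, hZne, hdYZ, hYZX⟩ := hm
  obtain ⟨Y₀, Z₀, hm₀eq, hY₀, hZ₀, hd₀, hX₀⟩ := hm₀β
  have hI0 : v.I Y Z = 0 := PMI_I (hPv ▸ hmP)
  have hI₀ : v.I Y₀ Z₀ ≠ 0 := by
    intro h0
    exact hm₀P (hPv ▸ (hm₀eq ▸ (⟨Y₀, Z₀, rfl, hY₀, hZ₀, hd₀, h0⟩ : s(Y₀, Z₀) ∈ v.PMI)))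
  obtain ⟨A, B, hA, hB, hdAB, hAY₀, hBZ₀, hABne, hIAB⟩ :=
    key v hv hYne hZne hdYZ hd₀ (by rw [hYZX, hX₀]) hI0 hI₀
  have hABnotP : s(A, B) ∉ P := by
    intro hmem
    exact hIAB (PMI_I (hPv ▸ hmem))
  have hle : MIle s(A, B) m₀ := ⟨A, B, Y₀, Z₀, rfl, hm₀eq, hAY₀, hBZ₀⟩
  have := hm₀min s(A, B) ⟨A, B, rfl, hA, hB, hdAB⟩ hABnotP hle
  rw [hm₀eq] at this
  rcases Sym2.eq_iff.mp this with ⟨rfl, rfl⟩ | ⟨rfl, rfl⟩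
  · exact hABne rfl
  · exact hABne (Finset.union_comm _ _)

/-- For every KC-PMI `P`, `P̄` equals the up-set (in the MI-poset)
generated by the union of all essential β-sets, and also the up-set generated by the
union of all positive β-sets. -/
theorem statement5 {N : ℕ} (hN : 2 ≤ N) (P : Set (MI N)) (hP : IsKCPMI P) :
    ({m : MI N | IsMIInst m ∧ m ∉ P} =
      {m : MI N | IsMIInst m ∧ ∃ m' : MI N, MIle m' m ∧
        ∃ X : PSet N, 2 ≤ X.card ∧ BEss P X ∧ m' ∈ betaSet X}) ∧
    ({m : MI N | IsMIInst m ∧ m ∉ P} =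
      {m : MI N | IsMIInst m ∧ ∃ m' : MI N, MIle m' m ∧
        ∃ X : PSet N, 2 ≤ X.card ∧ BPos P X ∧ m' ∈ betaSet X}) := by
  have hdown := hP.2
  -- Forward direction (common to both): find a minimal element below `m`.
  have fwd : ∀ m : MI N, IsMIInst m → m ∉ P → ∃ m' : MI N, MIle m' m ∧
      ∃ X : PSet N, 2 ≤ X.card ∧ BEss P X ∧ BPos P X ∧ m' ∈ betaSet X := by
    intro m hm hmP
    obtain ⟨m₀, hm₀min, hle⟩ := exists_min P m hm hmP
    obtain ⟨Y₀, Z₀, hm₀eq, hY₀, hZ₀, hd₀⟩ := hm₀min.1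
    refine ⟨m₀, hle, Y₀ ∪ Z₀, ?_, ?_, ?_, ?_⟩
    · rw [Finset.card_union_of_disjoint hd₀]
      have := Finset.one_le_card.mpr hY₀
      have := Finset.one_le_card.mpr hZ₀
      omega
    · exact ⟨m₀, ⟨Y₀, Z₀, hm₀eq, hY₀, hZ₀, hd₀, rfl⟩, hm₀min⟩
    · exact ess_pos P hP _ ⟨m₀, ⟨Y₀, Z₀, hm₀eq, hY₀, hZ₀, hd₀, rfl⟩, hm₀min⟩
    · exact ⟨Y₀, Z₀, hm₀eq, hY₀, hZ₀, hd₀, rfl⟩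
  -- Backward direction (common to both, using essential ⟹ positive).
  have bwd : ∀ m m' : MI N, IsMIInst m → MIle m' m →
      ∀ X : PSet N, BPos P X → m' ∈ betaSet X → m ∉ P := by
    intro m m' hm hle X hpos hm'β hmP
    have hm'inst : IsMIInst m' := by
      obtain ⟨Y, Z, h1, h2, h3, h4, -⟩ := hm'β
      exact ⟨Y, Z, h1, h2, h3, h4⟩
    exact hpos m' hm'β (hdown m' m hm'inst hmP hle)
  constructor
  · ext m
    simp only [Set.mem_setOf_eq]
    constructor
    · rintro ⟨hm, hmP⟩
      obtain ⟨m', hle, X, hcard, hess, -, hβ⟩ := fwd m hm hmP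
      exact ⟨hm, m', hle, X, hcard, hess, hβ⟩
    · rintro ⟨hm, m', hle, X, -, hess, hβ⟩
      exact ⟨hm, bwd m m' hm hle X (ess_pos P hP X hess) hβ⟩
  · ext m
    simp only [Set.mem_setOf_eq]
    constructor
    · rintro ⟨hm, hmP⟩
      obtain ⟨m', hle, X, hcard, -, hpos, hβ⟩ := fwd m hm hmP
      exact ⟨hm, m', hle, X, hcard, hpos, hβ⟩
    · rintro ⟨hm, m', hle, X, -, hpos, hβ⟩
      exact ⟨hm, bwd m m' hm hle X hpos hβ⟩

end HEC
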